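/- For n = 3 and m = 2^l · m_1 with m_1 odd, the length L_m(3) of the basic Ducci sequence equals l; that is, the minimal l' such that D^{l'}(0,0,1) is periodic under D in (Z/mZ)^3 equals l. -/

import Mathlib

open Matrix

/-- The Ducci map on `(ZMod m)^3`. -/
def ducci3 (m : ℕ) : ZMod m × ZMod m × ZMod m → ZMod m × ZMod m × ZMod m :=
  fun ⟨x, y, z⟩ => (x + y, y + z, z + x)

/-- The matrix of the Ducci map. -/
def Amat (R : Type*) [CommRing R] : Matrix (Fin 3) (Fin 3) R := !![1,1,0;0,1,1;1,0,1]

def Jmat : Matrix (Fin 3) (Fin 3) ℤ := !![1,1,1;1,1,1;1,1,1]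

lemma A6 : (Amat ℤ) ^ 6 = 1 + (21:ℤ) • Jmat := by
  have h : (Amat ℤ) ^ 6 = !![22, 21, 21; 21, 22, 21; 21, 21, 22] := by
    norm_num [Amat, pow_succ, Matrix.mul_fin_three]
  rw [h]
  ext i j
  fin_cases i <;> fin_cases j <;>
    simp [Jmat, Matrix.one_apply, Matrix.add_apply, Matrix.smul_apply, Matrix.vecHead,
      Matrix.vecTail]

lemma AJ : Amat ℤ * Jmat = (2:ℤ) • Jmat := by
  norm_num [Amat, Jmat, Matrix.mul_fin_three, Matrix.smul_of, Matrix.smul_vec3, smul_eq_mul]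

lemma AlJ (l : ℕ) : (Amat ℤ)^l * Jmat = ((2:ℤ)^l) • Jmat := by
  induction l with
  | zero => simp
  | succ n ih =>
    rw [pow_succ, mul_assoc, AJ, mul_smul_comm, ih, smul_smul, pow_succ]
    ring_nf

lemma key (l : ℕ) : (Amat ℤ)^(l+6) - (Amat ℤ)^l = ((21 * 2^l : ℤ)) • Jmat := by
  rw [pow_add, A6, mul_add, mul_one, mul_smul_comm, AlJ, smul_smul]
  exact add_sub_cancel_left _ _

/-- Casting the integer matrix power into any commutative ring. -/
lemma map_Apow (R : Type*) [CommRing R] (n : ℕ) :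
    ((Amat ℤ)^n).map (Int.cast : ℤ → R) = (Amat R)^n := by
  have h1 : (Amat ℤ).map (Int.cast : ℤ → R) = Amat R := by
    ext i j
    fin_cases i <;> fin_cases j <;>
      simp [Amat, Matrix.vecHead, Matrix.vecTail]
  have := (Int.castRingHom R).mapMatrix.map_pow (Amat ℤ) n
  simpa [RingHom.mapMatrix_apply, h1] using this

/-- Mod `2^l`, the matrix becomes periodic after `l` steps with period `6`. -/
lemma B6 (l : ℕ) : (Amat (ZMod (2^l)))^(l+6) = (Amat (ZMod (2^l)))^l := by
  have h2 : ((2 : ZMod (2^l)))^l = 0 := by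
    have : ((2:ℕ) : ZMod (2^l))^l = 0 := by
      rw [← Nat.cast_pow, ZMod.natCast_self]
    simpa using this
  have hmap : (((Amat ℤ)^(l+6) - (Amat ℤ)^l).map (Int.cast : ℤ → ZMod (2^l))) = 0 := by
    rw [key l]
    ext i j
    fin_cases i <;> fin_cases j <;>
      simp [Jmat, Matrix.map_apply, Matrix.smul_apply, Matrix.vecHead, Matrix.vecTail, h2]
  have hsub : ((Amat ℤ)^(l+6)).map (Int.cast : ℤ → ZMod (2^l))
      - ((Amat ℤ)^l).map (Int.cast : ℤ → ZMod (2^l)) = 0 := by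
    rw [← hmap]; ext i j; simp [Matrix.map_apply, Matrix.sub_apply]
  rw [map_Apow, map_Apow] at hsub
  exact sub_eq_zero.mp hsub

lemma Bper (l j : ℕ) : (Amat (ZMod (2^l)))^(l + 6*j) = (Amat (ZMod (2^l)))^l := by
  induction j with
  | zero => simp
  | succ n ih =>
    have h : l + 6*(n+1) = (l + 6*n) + 6 := by ring
    rw [h, pow_add, ih, ← pow_add, B6]

lemma odd_order (m₁ : ℕ) (hm₁ : Odd m₁) : ∃ k > 0, (Amat (ZMod m₁))^k = 1 := by
  haveI : NeZero m₁ := ⟨hm₁.pos.ne'⟩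
  have hdet : (Amat (ZMod m₁)).det = 2 := by
    simp [Amat, Matrix.det_fin_three, Matrix.vecHead, Matrix.vecTail]
    norm_num
  have h2 : IsUnit (2 : ZMod m₁) := by
    have : IsUnit ((2:ℕ) : ZMod m₁) :=
      (ZMod.isUnit_iff_coprime 2 m₁).mpr hm₁.coprime_two_left
    simpa using this
  have hA : IsUnit (Amat (ZMod m₁)) :=
    (Matrix.isUnit_iff_isUnit_det _).mpr (hdet ▸ h2)
  obtain ⟨U, hU⟩ := hA
  refine ⟨orderOf U, orderOf_pos U, ?_⟩
  have h1 : ((U ^ orderOf U : (Matrix (Fin 3) (Fin 3) (ZMod m₁))ˣ) : Matrix (Fin 3) (Fin 3) (ZMod m₁)) = ((1 : (Matrix (Fin 3) (Fin 3) (ZMod m₁))ˣ) : Matrix (Fin 3) (Fin 3) (ZMod m₁)) := by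
    rw [pow_orderOf_eq_one]
  rw [Units.val_pow_eq_pow_val, hU, Units.val_one] at h1
  exact h1

lemma cast_entry (R : Type*) [CommRing R] (n : ℕ) (i j : Fin 3) :
    ((((Amat ℤ)^n) i j : ℤ) : R) = ((Amat R)^n) i j := by
  conv_rhs => rw [← map_Apow R n]
  rfl

lemma combine (m l m₁ : ℕ) (hm₁ : Odd m₁) (hm : m = 2^l * m₁) :
    ∃ k > 0, (Amat (ZMod m))^(l + k) = (Amat (ZMod m))^l := by
  obtain ⟨k₁, hk₁pos, hk₁⟩ := odd_order m₁ hm₁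
  refine ⟨6 * k₁, by positivity, ?_⟩
  have hA1 : (Amat (ZMod m₁))^(l + 6*k₁) = (Amat (ZMod m₁))^l := by
    rw [pow_add, mul_comm 6 k₁, pow_mul, hk₁, one_pow, mul_one]
  have hdvd : ∀ i j, (m:ℤ) ∣ (((Amat ℤ)^(l+6*k₁)) i j - ((Amat ℤ)^l) i j) := by
    intro i j
    have hd2 : ((2^l : ℕ):ℤ) ∣ (((Amat ℤ)^(l+6*k₁)) i j - ((Amat ℤ)^l) i j) := by
      rw [← ZMod.intCast_zmod_eq_zero_iff_dvd]
      push_cast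
      rw [cast_entry, cast_entry, Bper l k₁, sub_self]
    have hd1 : ((m₁ : ℕ):ℤ) ∣ (((Amat ℤ)^(l+6*k₁)) i j - ((Amat ℤ)^l) i j) := by
      rw [← ZMod.intCast_zmod_eq_zero_iff_dvd]
      push_cast
      rw [cast_entry, cast_entry, hA1, sub_self]
    have hcop : IsCoprime ((2^l : ℕ):ℤ) ((m₁:ℕ):ℤ) :=
      Nat.isCoprime_iff_coprime.mpr ((Nat.coprime_two_left.mpr hm₁).pow_left l)
    have := hcop.mul_dvd hd2 hd1
    rw [hm]
    push_cast at this ⊢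
    exact this
  ext i j
  have h0 : (((((Amat ℤ)^(l+6*k₁)) i j - ((Amat ℤ)^l) i j : ℤ)) : ZMod m) = 0 :=
    (ZMod.intCast_zmod_eq_zero_iff_dvd _ _).mpr (hdvd i j)
  push_cast at h0
  rw [cast_entry, cast_entry] at h0
  exact sub_eq_zero.mp h0

def vecOf {m : ℕ} (p : ZMod m × ZMod m × ZMod m) : Fin 3 → ZMod m := ![p.1, p.2.1, p.2.2]

lemma vec_inj {m : ℕ} {p q : ZMod m × ZMod m × ZMod m} (h : vecOf p = vecOf q) : p = q := by
  obtain ⟨x,y,z⟩ := p; obtain ⟨a,b,c⟩ := q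
  have h0 := congrFun h 0
  have h1 := congrFun h 1
  have h2 := congrFun h 2
  simp [vecOf] at h0 h1 h2
  simp [h0, h1, h2]

lemma vec_ducci (m : ℕ) (p : ZMod m × ZMod m × ZMod m) :
    vecOf (ducci3 m p) = (Amat (ZMod m)).mulVec (vecOf p) := by
  obtain ⟨x,y,z⟩ := p
  funext i
  fin_cases i <;>
    simp [ducci3, vecOf, Amat, Matrix.mulVec, dotProduct, Fin.sum_univ_three,
      Matrix.vecHead, Matrix.vecTail] <;> ring

lemma vec_iter (m n : ℕ) (p : ZMod m × ZMod m × ZMod m) :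
    vecOf ((ducci3 m)^[n] p) = ((Amat (ZMod m))^n).mulVec (vecOf p) := by
  induction n with
  | zero => simp [Matrix.one_mulVec]
  | succ n ih =>
    rw [Function.iterate_succ_apply', vec_ducci, ih, Matrix.mulVec_mulVec, ← pow_succ']

lemma sum_pow (m n : ℕ) :
    (((Amat (ZMod m))^n).mulVec ![0,0,1]) 0 + (((Amat (ZMod m))^n).mulVec ![0,0,1]) 1
      + (((Amat (ZMod m))^n).mulVec ![0,0,1]) 2 = 2^n := by
  induction n with
  | zero => simp [Matrix.one_mulVec]
  | succ n ih =>
    rw [pow_succ', ← Matrix.mulVec_mulVec]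
    set w := ((Amat (ZMod m))^n).mulVec ![0,0,1] with hw
    have : ∀ i : Fin 3, (Amat (ZMod m)).mulVec w i =
        !![1,1,0;0,1,1;1,0,1].mulVec w i := fun i => by rw [Amat]
    rw [this 0, this 1, this 2]
    simp [Matrix.mulVec, dotProduct, Fin.sum_univ_three, Matrix.vecHead, Matrix.vecTail]
    rw [pow_succ]
    rw [← ih]
    ring

theorem length_eq_two_adic_val (m l m₁ : ℕ) (hm₁ : Odd m₁) (hm : m = 2 ^ l * m₁) :
    IsLeast {l' : ℕ | ∃ k > 0,
      (ducci3 m)^[l' + k] (0, 0, 1) = (ducci3 m)^[l'] (0, 0, 1)} l := by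
  constructor
  · obtain ⟨k, hk, hA⟩ := combine m l m₁ hm₁ hm
    refine ⟨k, hk, ?_⟩
    apply _root_.vec_inj
    rw [vec_iter, vec_iter, hA]
  · intro l' hl'
    obtain ⟨k, hk, heq⟩ := hl'
    have h1 := congrArg vecOf heq
    rw [vec_iter, vec_iter] at h1
    have hv : vecOf ((0:ZMod m),(0:ZMod m),(1:ZMod m)) = ![0,0,1] := rfl
    rw [hv] at h1
    have hsum : (2:ZMod m)^(l'+k) = 2^l' := by
      rw [← sum_pow m (l'+k), ← sum_pow m l', h1]
    have hnat : ((2^(l'+k) : ℕ) : ZMod m) = ((2^l' : ℕ) : ZMod m) := by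
      push_cast; exact hsum
    have hmod : 2^(l'+k) ≡ 2^l' [MOD m] := (ZMod.natCast_eq_natCast_iff _ _ _).mp hnat
    have hmod2 : 2^(l'+k) ≡ 2^l' [MOD 2^l] := hmod.of_dvd (Dvd.intro m₁ hm.symm)
    have hle : (2:ℕ)^l' ≤ 2^(l'+k) := Nat.pow_le_pow_right (by norm_num) (Nat.le_add_right _ _)
    have hdvd : 2^l ∣ 2^(l'+k) - 2^l' := (Nat.modEq_iff_dvd' hle).mp hmod2.symm
    have heqsub : 2^(l'+k) - 2^l' = 2^l' * (2^k - 1) := by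
      rw [pow_add, Nat.mul_sub, mul_one]
    rw [heqsub] at hdvd
    have hodd : Odd (2^k - 1) := by
      have h2k : Even ((2:ℕ)^k) := (Nat.even_pow).mpr ⟨even_two, hk.ne'⟩
      exact Nat.Even.sub_odd (Nat.one_le_two_pow) h2k odd_one
    have hcop : Nat.Coprime (2^l) (2^k - 1) :=
      ((Nat.coprime_two_left.mpr hodd).pow_left l)
    have hfin : (2:ℕ)^l ∣ 2^l' := hcop.dvd_of_dvd_mul_right hdvd
    exact (Nat.pow_dvd_pow_iff_le_right (by norm_num)).mp hfin
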